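/- Let g ∈ L²(ℝ), a > 0, E ⊆ [0,a] measurable, and A, B > 0. The following are equivalent: (1) A ≤ ⟨g,g⟩_a(t) ≤ B for almost every t ∈ E; (2) for every φ ∈ L²(E), A‖φ‖² ≤ ‖φ̃·g‖²_{L²(ℝ)} ≤ B‖φ‖², where φ̃ is the a-periodic extension of φ to ℝ. -/

import Mathlib

open MeasureTheory

open Set ENNReal


noncomputable def Ge (g : ℝ → ℂ) (a : ℝ) (t : ℝ) : ℝ≥0∞ := ∑' n : ℤ, (‖g (t - n * a)‖₊ : ℝ≥0∞) ^ 2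

lemma sq_enorm (z : ℂ) : ENNReal.ofReal (‖z‖ ^ 2) = (‖z‖₊ : ℝ≥0∞) ^ 2 := by
  rw [ENNReal.ofReal_pow (norm_nonneg _), ofReal_norm, enorm_eq_nnnorm]

lemma Ge_meas {g : ℝ → ℂ} (hg : StronglyMeasurable g) (a : ℝ) : Measurable (Ge g a) := by
  apply Measurable.ennreal_tsum
  intro n
  exact ((hg.measurable.comp (measurable_id.sub measurable_const)).nnnorm.coe_nnreal_ennreal).pow_const 2

lemma bounds_iff {g : ℝ → ℂ} {a A B : ℝ} (hA : 0 < A) (hB : 0 < B) (t : ℝ) :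
    (A ≤ (∑' n : ℤ, ‖g (t - n * a)‖ ^ 2) ∧ (∑' n : ℤ, ‖g (t - n * a)‖ ^ 2) ≤ B) ↔
      (ENNReal.ofReal A ≤ Ge g a t ∧ Ge g a t ≤ ENNReal.ofReal B) := by
  constructor
  · rintro ⟨h1, h2⟩
    have hs : Summable fun n : ℤ => ‖g (t - n * a)‖ ^ 2 := by
      by_contra hns
      rw [tsum_eq_zero_of_not_summable hns] at h1
      linarith
    have : Ge g a t = ENNReal.ofReal (∑' n : ℤ, ‖g (t - n * a)‖ ^ 2) := by
      rw [ENNReal.ofReal_tsum_of_nonneg (fun n => sq_nonneg _) hs]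
      exact tsum_congr fun n => (sq_enorm _).symm
    rw [this]
    exact ⟨ENNReal.ofReal_le_ofReal h1, ENNReal.ofReal_le_ofReal h2⟩
  · rintro ⟨h1, h2⟩
    have hne : Ge g a t ≠ ⊤ := (h2.trans_lt ENNReal.ofReal_lt_top).ne
    have htr : (Ge g a t).toReal = ∑' n : ℤ, ‖g (t - n * a)‖ ^ 2 := by
      rw [Ge, ENNReal.tsum_toReal_eq (fun n => by simp [ENNReal.pow_ne_top])]
      exact tsum_congr fun n => by simp [ENNReal.toReal_pow]
    constructor
    · rw [← htr]
      calc A = (ENNReal.ofReal A).toReal := (ENNReal.toReal_ofReal hA.le).symm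
      _ ≤ (Ge g a t).toReal := ENNReal.toReal_mono hne h1
    · rw [← htr]
      calc (Ge g a t).toReal ≤ (ENNReal.ofReal B).toReal := ENNReal.toReal_mono ofReal_ne_top h2
      _ = B := ENNReal.toReal_ofReal hB.le

lemma union_Ico {a : ℝ} (ha : 0 < a) : (⋃ n : ℤ, Set.Ico ((n : ℝ) * a) (n * a + a)) = Set.univ := by
  ext t
  simp only [Set.mem_iUnion, Set.mem_Ico, Set.mem_univ, iff_true]
  refine ⟨⌊t / a⌋, ?_, ?_⟩
  · calc ((⌊t / a⌋ : ℝ)) * a ≤ (t / a) * a :=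
        mul_le_mul_of_nonneg_right (Int.floor_le _) ha.le
      _ = t := div_mul_cancel₀ t ha.ne'
  · have h := Int.lt_floor_add_one (t / a)
    calc t = (t / a) * a := (div_mul_cancel₀ t ha.ne').symm
      _ < ((⌊t / a⌋ : ℝ) + 1) * a := mul_lt_mul_of_pos_right h ha
      _ = (⌊t / a⌋ : ℝ) * a + a := by ring

lemma disj_Ico {a : ℝ} (ha : 0 < a) :
    Pairwise (Function.onFun Disjoint fun n : ℤ => Set.Ico ((n : ℝ) * a) (n * a + a)) := by
  intro m n hmn
  apply Set.disjoint_left.2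
  rintro t ⟨h1, h2⟩ ⟨h3, h4⟩
  rcases lt_or_gt_of_ne hmn with h | h
  · have : (m : ℝ) + 1 ≤ n := by exact_mod_cast h
    nlinarith
  · have : (n : ℝ) + 1 ≤ m := by exact_mod_cast h
    nlinarith

lemma vanish {a : ℝ} (ha : 0 < a) {E : Set ℝ} (hEsub : E ⊆ Set.Icc 0 a) {φ : ℝ → ℂ}
    (hφ0 : ∀ t ∉ E, φ t = 0) {t : ℝ} {n : ℤ} (h1 : (n : ℝ) * a < t) (h2 : t < n * a + a)
    {m : ℤ} (hm : m ≠ n) : φ (t - m * a) = 0 := by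
  apply hφ0
  intro hmem
  have h3 := (hEsub hmem).1
  have h4 := (hEsub hmem).2
  have hmn : m ≤ n := by
    by_contra h
    push_neg at h
    have : (n : ℝ) + 1 ≤ m := by exact_mod_cast h
    nlinarith
  have hnm : n ≤ m := by
    by_contra h
    push_neg at h
    have : (m : ℝ) + 1 ≤ n := by exact_mod_cast h
    nlinarith
  exact hm (le_antisymm hmn hnm)

lemma tsum_collapse {a : ℝ} (ha : 0 < a) {E : Set ℝ} (hEsub : E ⊆ Set.Icc 0 a) {φ : ℝ → ℂ}
    (hφ0 : ∀ t ∉ E, φ t = 0) {t : ℝ} {n : ℤ} (h1 : (n : ℝ) * a < t) (h2 : t < n * a + a) :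
    (∑' m : ℤ, φ (t - m * a)) = φ (t - n * a) :=
  tsum_eq_single n fun m hm => vanish ha hEsub hφ0 h1 h2 hm

lemma floor_collapse {a : ℝ} (ha : 0 < a) {E : Set ℝ} (hEsub : E ⊆ Set.Icc 0 a) {φ : ℝ → ℂ}
    (hφ0 : ∀ t ∉ E, φ t = 0) {t : ℝ} (ht : ∀ n : ℤ, t ≠ n * a) :
    (∑' m : ℤ, φ (t - m * a)) = φ (t - ⌊t / a⌋ * a) := by
  have h1 : (⌊t / a⌋ : ℝ) * a < t := by
    rcases lt_or_eq_of_le (mul_le_mul_of_nonneg_right (Int.floor_le (t / a)) ha.le) with h | h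
    · calc ((⌊t / a⌋ : ℝ)) * a < (t / a) * a := h
        _ = t := div_mul_cancel₀ t ha.ne'
    · exfalso
      apply ht ⌊t / a⌋
      rw [h, div_mul_cancel₀ t ha.ne']
  have h2 : t < (⌊t / a⌋ : ℝ) * a + a := by
    have h := Int.lt_floor_add_one (t / a)
    calc t = (t / a) * a := (div_mul_cancel₀ t ha.ne').symm
      _ < ((⌊t / a⌋ : ℝ) + 1) * a := mul_lt_mul_of_pos_right h ha
      _ = (⌊t / a⌋ : ℝ) * a + a := by ring
  exact tsum_collapse ha hEsub hφ0 h1 h2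

lemma bad_null {a : ℝ} : (volume : Measure ℝ) (⋃ n : ℤ, {(n : ℝ) * a}) = 0 := by
  apply measure_iUnion_null
  intro n
  exact measure_singleton _

lemma aesm_prod {a : ℝ} (ha : 0 < a) {E : Set ℝ} (hEsub : E ⊆ Set.Icc 0 a) {φ g : ℝ → ℂ}
    (hφm : StronglyMeasurable φ) (hgm : StronglyMeasurable g) (hφ0 : ∀ t ∉ E, φ t = 0) :
    AEStronglyMeasurable (fun t => (∑' n : ℤ, φ (t - n * a)) * g t) (volume : Measure ℝ) := by
  refine ⟨fun t => φ (t - ⌊t / a⌋ * a) * g t, ?_, ?_⟩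
  · apply StronglyMeasurable.mul ?_ hgm
    apply hφm.comp_measurable
    apply measurable_id.sub
    exact ((measurable_of_countable (Int.cast : ℤ → ℝ)).comp (measurable_id.div_const a).floor).mul_const a
  · apply (ae_iff.2 _)
    apply measure_mono_null _ (bad_null (a := a))
    intro t ht
    simp only [Set.mem_setOf_eq] at ht
    simp only [Set.mem_iUnion, Set.mem_singleton_iff]
    by_contra hc
    push_neg at hc
    exact ht (by rw [floor_collapse ha hEsub hφ0 hc])
lemma key {a : ℝ} (ha : 0 < a) {E : Set ℝ} (hEsub : E ⊆ Set.Icc 0 a) {φ g : ℝ → ℂ}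
    (hφm : StronglyMeasurable φ) (hgm : StronglyMeasurable g) (hφ0 : ∀ t ∉ E, φ t = 0) :
    ∫⁻ t, (‖(∑' n : ℤ, φ (t - n * a)) * g t‖₊ : ℝ≥0∞) ^ 2 ∂(volume : Measure ℝ)
      = ∫⁻ t, (‖φ t‖₊ : ℝ≥0∞) ^ 2 * Ge g a t ∂(volume : Measure ℝ) := by
  have hmeas : ∀ n : ℤ, Measurable fun s : ℝ => (‖φ s‖₊ : ℝ≥0∞) ^ 2 * (‖g (s + n * a)‖₊ : ℝ≥0∞) ^ 2 := by
    intro n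
    exact ((hφm.measurable.nnnorm.coe_nnreal_ennreal).pow_const 2).mul
      (((hgm.measurable.comp (measurable_id.add_const _)).nnnorm.coe_nnreal_ennreal).pow_const 2)
  calc
    ∫⁻ t, (‖(∑' n : ℤ, φ (t - n * a)) * g t‖₊ : ℝ≥0∞) ^ 2 ∂volume
        = ∫⁻ t in ⋃ n : ℤ, Set.Ico ((n : ℝ) * a) (n * a + a),
            (‖(∑' n : ℤ, φ (t - n * a)) * g t‖₊ : ℝ≥0∞) ^ 2 ∂volume := by
          rw [union_Ico ha, Measure.restrict_univ]
    _ = ∑' n : ℤ, ∫⁻ t in Set.Ico ((n : ℝ) * a) (n * a + a),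
            (‖(∑' m : ℤ, φ (t - m * a)) * g t‖₊ : ℝ≥0∞) ^ 2 ∂volume :=
          lintegral_iUnion (fun n => measurableSet_Ico) (disj_Ico ha) _
    _ = ∑' n : ℤ, ∫⁻ t in Set.Ico ((n : ℝ) * a) (n * a + a),
            (‖φ (t - n * a)‖₊ : ℝ≥0∞) ^ 2 * (‖g t‖₊ : ℝ≥0∞) ^ 2 ∂volume := by
          refine tsum_congr fun n => ?_
          rw [← Measure.restrict_congr_set (Ioo_ae_eq_Ico (a := (n : ℝ) * a) (b := (n : ℝ) * a + a))]
          refine setLIntegral_congr_fun measurableSet_Ioo ?_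
          intro t ht
          beta_reduce
          rw [tsum_collapse ha hEsub hφ0 ht.1 ht.2, nnnorm_mul, ENNReal.coe_mul, mul_pow]
    _ = ∑' n : ℤ, ∫⁻ s in Set.Ico (0 : ℝ) a,
            (‖φ s‖₊ : ℝ≥0∞) ^ 2 * (‖g (s + n * a)‖₊ : ℝ≥0∞) ^ 2 ∂volume := by
          refine tsum_congr fun n => ?_
          have hemb : MeasurableEmbedding (fun s : ℝ => s + (n : ℝ) * a) :=
            (MeasurableEquiv.addRight ((n : ℝ) * a)).measurableEmbedding
          have := (measurePreserving_add_right (volume : Measure ℝ) ((n : ℝ) * a)).setLIntegral_comp_preimage_emb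
            hemb (fun t => (‖φ (t - n * a)‖₊ : ℝ≥0∞) ^ 2 * (‖g t‖₊ : ℝ≥0∞) ^ 2)
            (Set.Ico ((n : ℝ) * a) (n * a + a))
          rw [← this]
          have hpre : (fun s : ℝ => s + (n : ℝ) * a) ⁻¹' Set.Ico ((n : ℝ) * a) (n * a + a)
              = Set.Ico (0 : ℝ) a := by
            ext s
            simp only [Set.mem_preimage, Set.mem_Ico]
            constructor
            · rintro ⟨u, v⟩; constructor <;> linarith
            · rintro ⟨u, v⟩; constructor <;> linarith
          rw [hpre]
          refine setLIntegral_congr_fun measurableSet_Ico ?_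
          intro s _
          simp only [add_sub_cancel_right]
    _ = ∫⁻ s in Set.Ico (0 : ℝ) a,
            ∑' n : ℤ, (‖φ s‖₊ : ℝ≥0∞) ^ 2 * (‖g (s + n * a)‖₊ : ℝ≥0∞) ^ 2 ∂volume :=
          (lintegral_tsum fun n => (hmeas n).aemeasurable).symm
    _ = ∫⁻ s in Set.Ico (0 : ℝ) a, (‖φ s‖₊ : ℝ≥0∞) ^ 2 * Ge g a s ∂volume := by
          refine lintegral_congr fun s => ?_
          rw [ENNReal.tsum_mul_left]
          congr 1
          rw [Ge]
          have hterm : ∀ n : ℤ, (‖g (s + n * a)‖₊ : ℝ≥0∞) ^ 2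
              = (fun m : ℤ => (‖g (s - m * a)‖₊ : ℝ≥0∞) ^ 2) ((Equiv.neg ℤ) n) := by
            intro n
            simp only [Equiv.neg_apply]
            congr 2
            push_cast
            ring
          rw [tsum_congr hterm]
          exact (Equiv.neg ℤ).tsum_eq fun m : ℤ => (‖g (s - m * a)‖₊ : ℝ≥0∞) ^ 2
    _ = ∫⁻ s, (‖φ s‖₊ : ℝ≥0∞) ^ 2 * Ge g a s ∂volume := by
          rw [← lintegral_indicator measurableSet_Ico]
          refine lintegral_congr_ae ?_
          have hsing : (volume : Measure ℝ) {a} = 0 := measure_singleton a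
          rw [Filter.EventuallyEq, ae_iff]
          refine measure_mono_null ?_ hsing
          intro s hs
          simp only [Set.mem_setOf_eq] at hs
          simp only [Set.mem_singleton_iff]
          by_contra hne
          apply hs
          rw [Set.indicator_apply]
          split_ifs with h
          · rfl
          · have hsE : s ∉ E := by
              intro hsE
              have := hEsub hsE
              exact h ⟨this.1, lt_of_le_of_ne this.2 hne⟩
            rw [hφ0 s hsE]
            simp
lemma integral_sq_eq {h : ℝ → ℂ} (hm : AEStronglyMeasurable h (volume : Measure ℝ)) :
    ∫ t, ‖h t‖ ^ 2 ∂(volume : Measure ℝ) = (∫⁻ t, (‖h t‖₊ : ℝ≥0∞) ^ 2 ∂(volume : Measure ℝ)).toReal := by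
  rw [integral_eq_lintegral_of_nonneg_ae (Filter.Eventually.of_forall fun t => sq_nonneg _)
    ((hm.norm.aemeasurable.pow_const 2).aestronglyMeasurable)]
  congr 1
  exact lintegral_congr fun t => sq_enorm _

lemma lintegral_sq_lt_top {h : ℝ → ℂ} (hL : MemLp h 2 (volume : Measure ℝ)) :
    ∫⁻ t, (‖h t‖₊ : ℝ≥0∞) ^ 2 ∂(volume : Measure ℝ) < ⊤ := by
  have h2 := hL.2
  rw [eLpNorm_eq_lintegral_rpow_enorm_toReal (by norm_num) (by norm_num)] at h2
  simp only [ENNReal.toReal_ofNat, enorm_eq_nnnorm] at h2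
  have : ∫⁻ t, (‖h t‖₊ : ℝ≥0∞) ^ (2 : ℝ) ∂volume < ⊤ := by
    by_contra hc
    push_neg at hc
    rw [top_le_iff.1 hc] at h2
    simp at h2
  refine lt_of_eq_of_lt ?_ this
  refine lintegral_congr fun t => ?_
  rw [← ENNReal.rpow_natCast]
  norm_num
lemma forward {a : ℝ} (ha : 0 < a) {E : Set ℝ} (hEsub : E ⊆ Set.Icc 0 a) {g : ℝ → ℂ}
    (hgm : StronglyMeasurable g) {A B : ℝ} (hA : 0 < A) (hB : 0 < B)
    (h1 : ∀ᵐ t : ℝ ∂(volume : Measure ℝ), t ∈ E →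
      ENNReal.ofReal A ≤ Ge g a t ∧ Ge g a t ≤ ENNReal.ofReal B)
    {φ : ℝ → ℂ} (hφ : MemLp φ 2 (volume : Measure ℝ)) (hφm : StronglyMeasurable φ)
    (hφ0 : ∀ t ∉ E, φ t = 0) :
    A * (∫ t : ℝ, ‖φ t‖ ^ 2) ≤ (∫ t : ℝ, ‖(∑' n : ℤ, φ (t - n * a)) * g t‖ ^ 2) ∧
      (∫ t : ℝ, ‖(∑' n : ℤ, φ (t - n * a)) * g t‖ ^ 2) ≤ B * ∫ t : ℝ, ‖φ t‖ ^ 2 := by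
  set I := ∫⁻ t, (‖φ t‖₊ : ℝ≥0∞) ^ 2 ∂(volume : Measure ℝ) with hI
  set L := ∫⁻ t, (‖(∑' n : ℤ, φ (t - n * a)) * g t‖₊ : ℝ≥0∞) ^ 2 ∂(volume : Measure ℝ) with hL
  have hIlt : I < ⊤ := lintegral_sq_lt_top hφ
  have hφmeas : Measurable fun t => (‖φ t‖₊ : ℝ≥0∞) ^ 2 :=
    (hφm.measurable.nnnorm.coe_nnreal_ennreal).pow_const 2
  have hkey : L = ∫⁻ t, (‖φ t‖₊ : ℝ≥0∞) ^ 2 * Ge g a t ∂volume := key ha hEsub hφm hgm hφ0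
  have hup : L ≤ ENNReal.ofReal B * I := by
    rw [hkey, hI, ← lintegral_const_mul _ hφmeas]
    refine lintegral_mono_ae ?_
    filter_upwards [h1] with t ht
    by_cases htE : t ∈ E
    · rw [mul_comm]
      exact mul_le_mul_left (ht htE).2 _
    · simp [hφ0 t htE]
  have hlo : ENNReal.ofReal A * I ≤ L := by
    rw [hkey, hI, ← lintegral_const_mul _ hφmeas]
    refine lintegral_mono_ae ?_
    filter_upwards [h1] with t ht
    by_cases htE : t ∈ E
    · rw [mul_comm]
      exact mul_le_mul_right (ht htE).1 _
    · simp [hφ0 t htE]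
  have hLlt : L < ⊤ := hup.trans_lt (ENNReal.mul_lt_top ENNReal.ofReal_lt_top hIlt)
  rw [integral_sq_eq hφm.aestronglyMeasurable,
    integral_sq_eq (aesm_prod ha hEsub hφm hgm hφ0), ← hI, ← hL]
  constructor
  · calc A * I.toReal = (ENNReal.ofReal A * I).toReal := by
          rw [ENNReal.toReal_mul, ENNReal.toReal_ofReal hA.le]
      _ ≤ L.toReal := ENNReal.toReal_mono hLlt.ne hlo
  · calc L.toReal ≤ (ENNReal.ofReal B * I).toReal :=
          ENNReal.toReal_mono (ENNReal.mul_lt_top ENNReal.ofReal_lt_top hIlt).ne hup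
      _ = B * I.toReal := by rw [ENNReal.toReal_mul, ENNReal.toReal_ofReal hB.le]
lemma setLIntegral_le_const {F : Set ℝ} (hF : MeasurableSet F) {G : ℝ → ℝ≥0∞} {c : ℝ≥0∞}
    (hc : ∀ t ∈ F, G t ≤ c) : ∫⁻ t in F, G t ∂(volume : Measure ℝ) ≤ c * volume F := by
  calc ∫⁻ t in F, G t ∂volume ≤ ∫⁻ _ in F, c ∂volume := by
        refine lintegral_mono_ae ?_
        filter_upwards [ae_restrict_mem hF] with t ht using hc t ht
    _ = c * volume F := by rw [setLIntegral_const]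

lemma const_le_setLIntegral {F : Set ℝ} (hF : MeasurableSet F) {G : ℝ → ℝ≥0∞} {c : ℝ≥0∞}
    (hc : ∀ t ∈ F, c ≤ G t) : c * volume F ≤ ∫⁻ t in F, G t ∂(volume : Measure ℝ) := by
  calc c * volume F = ∫⁻ _ in F, c ∂volume := by rw [setLIntegral_const]
    _ ≤ ∫⁻ t in F, G t ∂volume := by
        refine lintegral_mono_ae ?_
        filter_upwards [ae_restrict_mem hF] with t ht using hc t ht

lemma backward_core {a : ℝ} (ha : 0 < a) {E : Set ℝ} (hE : MeasurableSet E)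
    (hEsub : E ⊆ Set.Icc 0 a) {g : ℝ → ℂ} (hgm : StronglyMeasurable g)
    {A B : ℝ} (hA : 0 < A) (hB : 0 < B)
    (H : ∀ F : Set ℝ, MeasurableSet F → F ⊆ E →
      A * (volume F).toReal ≤ (∫⁻ t in F, Ge g a t ∂volume).toReal ∧
        (∫⁻ t in F, Ge g a t ∂volume).toReal ≤ B * (volume F).toReal) :
    ∀ᵐ t : ℝ ∂(volume : Measure ℝ), t ∈ E →
      ENNReal.ofReal A ≤ Ge g a t ∧ Ge g a t ≤ ENNReal.ofReal B := by
  have hGm := Ge_meas hgm a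
  have hfin : ∀ F : Set ℝ, F ⊆ E → volume F ≠ ⊤ := by
    intro F hFE
    refine ((measure_mono (hFE.trans hEsub)).trans_lt ?_).ne
    rw [Real.volume_Icc]
    exact ENNReal.ofReal_lt_top
  -- part 1 : Ge < ofReal A
  have hS1 : ∀ k : ℕ, volume (E ∩ {t | Ge g a t ≤ ENNReal.ofReal (A - 1 / (k + 1))}) = 0 := by
    intro k
    set F := E ∩ {t | Ge g a t ≤ ENNReal.ofReal (A - 1 / (k + 1))} with hFdef
    have hFm : MeasurableSet F := hE.inter (hGm measurableSet_Iic)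
    have hFE : F ⊆ E := Set.inter_subset_left
    have hμ : volume F ≠ ⊤ := hfin F hFE
    have hL : ∫⁻ t in F, Ge g a t ∂volume ≤ ENNReal.ofReal (A - 1 / (k + 1)) * volume F :=
      setLIntegral_le_const hFm fun t ht => ht.2
    obtain ⟨hH1, _⟩ := H F hFm hFE
    by_contra hne
    have hT : 0 < (volume F).toReal := ENNReal.toReal_pos hne hμ
    have hLfin : (∫⁻ t in F, Ge g a t ∂volume) ≠ ⊤ :=
      (hL.trans_lt (ENNReal.mul_lt_top ENNReal.ofReal_lt_top (lt_top_iff_ne_top.2 hμ))).ne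
    have h2 : (∫⁻ t in F, Ge g a t ∂volume).toReal
        ≤ max (A - 1 / (k + 1)) 0 * (volume F).toReal := by
      calc (∫⁻ t in F, Ge g a t ∂volume).toReal
          ≤ (ENNReal.ofReal (A - 1 / (k + 1)) * volume F).toReal :=
            ENNReal.toReal_mono
              (ENNReal.mul_lt_top ENNReal.ofReal_lt_top (lt_top_iff_ne_top.2 hμ)).ne hL
        _ = max (A - 1 / (k + 1)) 0 * (volume F).toReal := by
            rw [ENNReal.toReal_mul, ENNReal.toReal_ofReal']
    have hkpos : (0 : ℝ) < 1 / (k + 1) := by positivity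
    have : A * (volume F).toReal ≤ max (A - 1 / (k + 1)) 0 * (volume F).toReal := hH1.trans h2
    have hmax : max (A - 1 / (k + 1)) 0 < A := by
      rcases max_cases (A - 1 / (k + 1)) 0 with ⟨h, _⟩ | ⟨h, _⟩ <;> rw [h] <;> linarith
    nlinarith
  have hN1 : volume (E ∩ {t | Ge g a t < ENNReal.ofReal A}) = 0 := by
    refine measure_mono_null ?_
      (measure_iUnion_null (s := fun k : ℕ =>
        E ∩ {t | Ge g a t ≤ ENNReal.ofReal (A - 1 / (k + 1))}) hS1)
    rintro t ⟨htE, ht⟩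
    have hne : Ge g a t ≠ ⊤ := (ht.trans ENNReal.ofReal_lt_top).ne
    have htr : (Ge g a t).toReal < A := by
      have := (ENNReal.toReal_lt_toReal hne ENNReal.ofReal_ne_top).2 ht
      rwa [ENNReal.toReal_ofReal hA.le] at this
    obtain ⟨k, hk⟩ := exists_nat_one_div_lt (sub_pos.2 htr)
    refine Set.mem_iUnion.2 ⟨k, htE, ?_⟩
    show Ge g a t ≤ ENNReal.ofReal (A - 1 / (k + 1))
    rw [← ENNReal.ofReal_toReal hne]
    refine ENNReal.ofReal_le_ofReal ?_
    push_cast at hk ⊢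
    linarith
  -- part 2 : Ge = ⊤
  have hN2 : volume (E ∩ {t | Ge g a t = ⊤}) = 0 := by
    set F := E ∩ {t | Ge g a t = ⊤} with hFdef
    have hFm : MeasurableSet F := hE.inter (hGm (measurableSet_singleton ⊤))
    have hFE : F ⊆ E := Set.inter_subset_left
    have hμ : volume F ≠ ⊤ := hfin F hFE
    by_contra hne
    have hT : 0 < (volume F).toReal := ENNReal.toReal_pos hne hμ
    have hL : ∫⁻ t in F, Ge g a t ∂volume = ⊤ := by
      refine top_le_iff.1 ?_
      calc (⊤ : ℝ≥0∞) = ⊤ * volume F := by rw [ENNReal.top_mul hne]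
        _ ≤ ∫⁻ t in F, Ge g a t ∂volume := const_le_setLIntegral hFm fun t ht => ht.2.ge
    obtain ⟨hH1, _⟩ := H F hFm hFE
    rw [hL, ENNReal.toReal_top] at hH1
    nlinarith
  -- part 3 : ofReal B < Ge < ⊤
  have hS3 : ∀ k m : ℕ, volume ((E ∩ {t | ENNReal.ofReal (B + 1 / (k + 1)) ≤ Ge g a t}) ∩
      {t | Ge g a t ≤ (m : ℝ≥0∞)}) = 0 := by
    intro k m
    set F := (E ∩ {t | ENNReal.ofReal (B + 1 / (k + 1)) ≤ Ge g a t}) ∩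
      {t | Ge g a t ≤ (m : ℝ≥0∞)} with hFdef
    have hFm : MeasurableSet F := (hE.inter (hGm measurableSet_Ici)).inter (hGm measurableSet_Iic)
    have hFE : F ⊆ E := fun t ht => ht.1.1
    have hμ : volume F ≠ ⊤ := hfin F hFE
    have hL : ∫⁻ t in F, Ge g a t ∂volume ≤ (m : ℝ≥0∞) * volume F :=
      setLIntegral_le_const hFm fun t ht => ht.2
    have hLfin : (∫⁻ t in F, Ge g a t ∂volume) ≠ ⊤ :=
      (hL.trans_lt (ENNReal.mul_lt_top (ENNReal.natCast_lt_top m) (lt_top_iff_ne_top.2 hμ))).ne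
    have hlo : ENNReal.ofReal (B + 1 / (k + 1)) * volume F ≤ ∫⁻ t in F, Ge g a t ∂volume :=
      const_le_setLIntegral hFm fun t ht => ht.1.2
    obtain ⟨_, hH2⟩ := H F hFm hFE
    by_contra hne
    have hT : 0 < (volume F).toReal := ENNReal.toReal_pos hne hμ
    have hkpos : (0 : ℝ) < 1 / (k + 1) := by positivity
    have h2 : (B + 1 / (k + 1)) * (volume F).toReal ≤ (∫⁻ t in F, Ge g a t ∂volume).toReal := by
      calc (B + 1 / (k + 1)) * (volume F).toReal
          = (ENNReal.ofReal (B + 1 / (k + 1)) * volume F).toReal := by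
            rw [ENNReal.toReal_mul, ENNReal.toReal_ofReal (by linarith)]
        _ ≤ (∫⁻ t in F, Ge g a t ∂volume).toReal := ENNReal.toReal_mono hLfin hlo
    nlinarith [h2.trans hH2]
  have hN3 : volume (E ∩ {t | ENNReal.ofReal B < Ge g a t ∧ Ge g a t ≠ ⊤}) = 0 := by
    refine measure_mono_null ?_ (measure_iUnion_null fun k : ℕ =>
      measure_iUnion_null fun m : ℕ => hS3 k m)
    rintro t ⟨htE, htB, htne⟩
    have htr : B < (Ge g a t).toReal := by
      have := (ENNReal.toReal_lt_toReal ENNReal.ofReal_ne_top htne).2 htB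
      rwa [ENNReal.toReal_ofReal hB.le] at this
    obtain ⟨k, hk⟩ := exists_nat_one_div_lt (sub_pos.2 htr)
    obtain ⟨m, hm⟩ := exists_nat_ge (Ge g a t).toReal
    refine Set.mem_iUnion.2 ⟨k, Set.mem_iUnion.2 ⟨m, ⟨⟨htE, ?_⟩, ?_⟩⟩⟩
    · show ENNReal.ofReal (B + 1 / (k + 1)) ≤ Ge g a t
      rw [← ENNReal.ofReal_toReal htne]
      refine ENNReal.ofReal_le_ofReal ?_
      push_cast at hk ⊢
      linarith
    · show Ge g a t ≤ (m : ℝ≥0∞)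
      rw [← ENNReal.ofReal_toReal htne, ← ENNReal.ofReal_natCast m]
      exact ENNReal.ofReal_le_ofReal hm
  rw [ae_iff]
  refine measure_mono_null ?_
    (measure_union_null hN1 (measure_union_null hN2 hN3))
  intro t ht
  simp only [Set.mem_setOf_eq] at ht
  push_neg at ht
  obtain ⟨htE, hbad⟩ := ht
  by_cases h1 : ENNReal.ofReal A ≤ Ge g a t
  · have h2 : ENNReal.ofReal B < Ge g a t := hbad h1
    by_cases h3 : Ge g a t = ⊤
    · exact Or.inr (Or.inl ⟨htE, h3⟩)
    · exact Or.inr (Or.inr ⟨htE, h2, h3⟩)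
  · push_neg at h1
    exact Or.inl ⟨htE, h1⟩
lemma ae_shift {f f' : ℝ → ℂ} (h : f =ᵐ[(volume : Measure ℝ)] f') (a : ℝ) :
    ∀ᵐ t : ℝ ∂(volume : Measure ℝ), ∀ n : ℤ, f (t - n * a) = f' (t - n * a) := by
  rw [ae_all_iff]
  intro n
  have := (measurePreserving_sub_right (volume : Measure ℝ) ((n : ℝ) * a)).quasiMeasurePreserving.ae_eq h
  filter_upwards [this] with t ht using ht

lemma lint_ind {F : Set ℝ} (hFm : MeasurableSet F) :
    ∫⁻ t, (‖(F.indicator (fun _ => (1 : ℂ))) t‖₊ : ℝ≥0∞) ^ 2 ∂(volume : Measure ℝ) = volume F := by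
  have : ∀ t, (‖(F.indicator (fun _ => (1 : ℂ))) t‖₊ : ℝ≥0∞) ^ 2
      = F.indicator (fun _ => (1 : ℝ≥0∞)) t := by
    intro t
    by_cases h : t ∈ F <;> simp [Set.indicator_of_mem, Set.indicator_of_notMem, h]
  rw [lintegral_congr this, lintegral_indicator hFm, setLIntegral_const, one_mul]

lemma lint_ind_mul {F : Set ℝ} (hFm : MeasurableSet F) (G : ℝ → ℝ≥0∞) :
    ∫⁻ t, (‖(F.indicator (fun _ => (1 : ℂ))) t‖₊ : ℝ≥0∞) ^ 2 * G t ∂(volume : Measure ℝ)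
      = ∫⁻ t in F, G t ∂(volume : Measure ℝ) := by
  rw [← lintegral_indicator hFm]
  refine lintegral_congr fun t => ?_
  by_cases h : t ∈ F <;> simp [Set.indicator_of_mem, Set.indicator_of_notMem, h]

/-- For E ⊆ [0,a]: `A ≤ ⟨g,g⟩_a ≤ B` a.e. on E iff for every φ ∈ L²(E),
`A‖φ‖² ≤ ‖φ̃·g‖² ≤ B‖φ‖²`, where `φ̃(t) = ∑_{n∈ℤ} φ(t − na)` is the a-periodic
extension of φ. -/
theorem stmt16 (a : ℝ) (ha : 0 < a) (E : Set ℝ) (hE : MeasurableSet E)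
    (hEsub : E ⊆ Set.Icc 0 a) (g : ℝ → ℂ)
    (hg : MemLp g 2 (volume : Measure ℝ)) (A B : ℝ) (hA : 0 < A) (hB : 0 < B) :
    (∀ᵐ t : ℝ ∂volume, t ∈ E →
        A ≤ (∑' n : ℤ, ‖g (t - n * a)‖ ^ 2) ∧ (∑' n : ℤ, ‖g (t - n * a)‖ ^ 2) ≤ B) ↔
      ∀ φ : ℝ → ℂ, MemLp φ 2 (volume : Measure ℝ) → (∀ t : ℝ, t ∉ E → φ t = 0) →
        A * (∫ t : ℝ, ‖φ t‖ ^ 2) ≤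
            (∫ t : ℝ, ‖(∑' n : ℤ, φ (t - n * a)) * g t‖ ^ 2) ∧
          (∫ t : ℝ, ‖(∑' n : ℤ, φ (t - n * a)) * g t‖ ^ 2) ≤
            B * ∫ t : ℝ, ‖φ t‖ ^ 2 := by
  set g' := hg.1.mk g with hg'def
  have hg'm : StronglyMeasurable g' := hg.1.stronglyMeasurable_mk
  have hgg' : g =ᵐ[(volume : Measure ℝ)] g' := hg.1.ae_eq_mk
  have hgall := ae_shift hgg' a
  -- transfer of the left side
  have hLHS : (∀ᵐ t : ℝ ∂volume, t ∈ E →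
        A ≤ (∑' n : ℤ, ‖g (t - n * a)‖ ^ 2) ∧ (∑' n : ℤ, ‖g (t - n * a)‖ ^ 2) ≤ B) ↔
      (∀ᵐ t : ℝ ∂(volume : Measure ℝ), t ∈ E →
        ENNReal.ofReal A ≤ Ge g' a t ∧ Ge g' a t ≤ ENNReal.ofReal B) := by
    constructor
    · intro h
      filter_upwards [h, hgall] with t ht hn htE
      have hsum : (∑' n : ℤ, ‖g (t - n * a)‖ ^ 2) = ∑' n : ℤ, ‖g' (t - n * a)‖ ^ 2 :=
        tsum_congr fun n => by rw [hn n]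
      exact (bounds_iff hA hB t).1 (hsum ▸ ht htE)
    · intro h
      filter_upwards [h, hgall] with t ht hn htE
      have hsum : (∑' n : ℤ, ‖g (t - n * a)‖ ^ 2) = ∑' n : ℤ, ‖g' (t - n * a)‖ ^ 2 :=
        tsum_congr fun n => by rw [hn n]
      rw [hsum]
      exact (bounds_iff hA hB t).2 (ht htE)
  rw [hLHS]
  constructor
  · intro h1 φ hφ hφ0
    set ψ := E.indicator (hφ.1.mk φ) with hψdef
    have hψm : StronglyMeasurable ψ := hφ.1.stronglyMeasurable_mk.indicator hE
    have hφψ : φ =ᵐ[(volume : Measure ℝ)] ψ := by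
      filter_upwards [hφ.1.ae_eq_mk] with t hteq
      by_cases htE : t ∈ E
      · rw [hψdef]
        simp only [Set.indicator_of_mem htE]
        exact hteq
      · rw [hψdef]
        simp only [Set.indicator_of_notMem htE]
        exact hφ0 t htE
    have hψ : MemLp ψ 2 (volume : Measure ℝ) := hφ.ae_eq hφψ
    have hψ0 : ∀ t ∉ E, ψ t = 0 := fun t htE => Set.indicator_of_notMem htE _
    have hfwd := forward ha hEsub hg'm hA hB h1 hψ hψm hψ0
    have hφall := ae_shift hφψ a
    have hint1 : (∫ t : ℝ, ‖φ t‖ ^ 2) = ∫ t : ℝ, ‖ψ t‖ ^ 2 := by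
      refine integral_congr_ae ?_
      filter_upwards [hφψ] with t ht
      rw [ht]
    have hint2 : (∫ t : ℝ, ‖(∑' n : ℤ, φ (t - n * a)) * g t‖ ^ 2)
        = ∫ t : ℝ, ‖(∑' n : ℤ, ψ (t - n * a)) * g' t‖ ^ 2 := by
      refine integral_congr_ae ?_
      filter_upwards [hφall, hgg'] with t hn htg
      have : (∑' n : ℤ, φ (t - n * a)) = ∑' n : ℤ, ψ (t - n * a) :=
        tsum_congr fun n => hn n
      rw [this, htg]
    rw [hint1, hint2]
    exact hfwd
  · intro h2
    refine backward_core ha hE hEsub hg'm hA hB ?_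
    intro F hFm hFE
    set φ := F.indicator (fun _ => (1 : ℂ)) with hφdef
    have hφm : StronglyMeasurable φ := stronglyMeasurable_const.indicator hFm
    have hμF : volume F ≠ ⊤ := by
      refine ((measure_mono (hFE.trans hEsub)).trans_lt ?_).ne
      rw [Real.volume_Icc]
      exact ENNReal.ofReal_lt_top
    have hφ : MemLp φ 2 (volume : Measure ℝ) := memLp_indicator_const 2 hFm 1 (Or.inr hμF)
    have hφ0 : ∀ t ∉ E, φ t = 0 := fun t htE =>
      Set.indicator_of_notMem (fun htF => htE (hFE htF)) _
    have happ := h2 φ hφ hφ0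
    have hint1 : (∫ t : ℝ, ‖φ t‖ ^ 2) = (volume F).toReal := by
      rw [integral_sq_eq hφm.aestronglyMeasurable, hφdef, lint_ind hFm]
    have hint2 : (∫ t : ℝ, ‖(∑' n : ℤ, φ (t - n * a)) * g t‖ ^ 2)
        = (∫⁻ t in F, Ge g' a t ∂volume).toReal := by
      have he : (∫ t : ℝ, ‖(∑' n : ℤ, φ (t - n * a)) * g t‖ ^ 2)
          = ∫ t : ℝ, ‖(∑' n : ℤ, φ (t - n * a)) * g' t‖ ^ 2 := by
        refine integral_congr_ae ?_
        filter_upwards [hgg'] with t htg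
        rw [htg]
      rw [he, integral_sq_eq (aesm_prod ha hEsub hφm hg'm hφ0),
        key ha hEsub hφm hg'm hφ0, hφdef, lint_ind_mul hFm]
    rw [hint1, hint2] at happ
    exact happ
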